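/- A reduced semistandard Young tableau T with entries in [n] (no two equal columns) is maximal (its columns form a maximal chain in the tableau order on nonempty subsets of [n]) if and only if the set of all parts of the partitions λ^{(i)}(T) for i ∈ [n] equals {1, 2, …, binom(n+1,2)}, where λ^{(i)}(T) is the shape of the tableau obtained from T by removing all cells with labels greater than i. -/

import Mathlib

/-- The `k`-th smallest element of a finite set of naturals (0-indexed). -/
def nthSmall (A : Finset ℕ) (k : ℕ) : ℕ := (A.sort (· ≤ ·)).getD k 0

/-- The tableau (Gale) order on finite sets of naturals. -/
def galeLe (A B : Finset ℕ) : Prop :=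
  B.card ≤ A.card ∧ ∀ k < B.card, nthSmall A k ≤ nthSmall B k

/-- A chain in the poset `T_n` of nonempty subsets of `[n]` under the tableau order. -/
def IsGaleChain (n : ℕ) (𝒞 : Finset (Finset ℕ)) : Prop :=
  (∀ A ∈ 𝒞, A.Nonempty ∧ A ⊆ Finset.Icc 1 n) ∧
    ∀ A ∈ 𝒞, ∀ B ∈ 𝒞, galeLe A B ∨ galeLe B A

/-- A maximal chain in `T_n`. -/
def IsMaximalGaleChain (n : ℕ) (𝒞 : Finset (Finset ℕ)) : Prop :=
  IsGaleChain n 𝒞 ∧ ∀ 𝒟 : Finset (Finset ℕ), IsGaleChain n 𝒟 → 𝒞 ⊆ 𝒟 → 𝒟 = 𝒞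

/-- The set of entries of the `j`-th column (0-indexed) of a semistandard Young
tableau. -/
def colSetOf (μ : YoungDiagram) (T : SemistandardYoungTableau μ) (j : ℕ) : Finset ℕ :=
  (Finset.range (μ.colLen j)).image (fun i => T i j)

/-- `λ^{(k)}_{i+1}`: the length of row `i` (0-indexed) of the tableau `T` restricted
to entries `≤ k`. -/
def partRow (μ : YoungDiagram) (T : SemistandardYoungTableau μ) (k i : ℕ) : ℕ :=
  ((Finset.range (μ.rowLen i)).filter (fun j => T i j ≤ k)).card


/-- number of elements of `A` that are `≤ m`. -/
def cnt (A : Finset ℕ) (m : ℕ) : ℕ := (A.filter (· ≤ m)).card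

lemma cnt_le_card (A : Finset ℕ) (m : ℕ) : cnt A m ≤ A.card :=
  Finset.card_filter_le _ _

lemma cnt_mono {A B : Finset ℕ} (h : A ⊆ B) (m : ℕ) : cnt A m ≤ cnt B m :=
  Finset.card_le_card (Finset.filter_subset_filter _ h)

lemma cnt_eq_card {A : Finset ℕ} {n m : ℕ} (hA : A ⊆ Finset.Icc 1 n) (hm : n ≤ m) :
    cnt A m = A.card := by
  unfold cnt
  congr 1
  apply Finset.filter_true_of_mem
  intro x hx
  have := hA hx
  simp only [Finset.mem_Icc] at this
  omega

lemma cnt_zero_eq (A : Finset ℕ) : cnt A 0 = if 0 ∈ A then 1 else 0 := by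
  unfold cnt
  have : A.filter (· ≤ 0) = A.filter (· = 0) := by
    apply Finset.filter_congr; intro x _; constructor <;> (intro; omega)
  rw [this, Finset.filter_eq']
  split <;> simp

lemma cnt_succ (A : Finset ℕ) (m : ℕ) :
    cnt A (m + 1) = cnt A m + (if (m + 1) ∈ A then 1 else 0) := by
  unfold cnt
  have h1 : A.filter (· ≤ m + 1) = A.filter (· ≤ m) ∪ A.filter (· = m + 1) := by
    ext x; simp only [Finset.mem_filter, Finset.mem_union]; constructor
    · rintro ⟨hx, h⟩; rcases Nat.lt_or_ge x (m+1) with h' | h'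
      · exact Or.inl ⟨hx, by omega⟩
      · exact Or.inr ⟨hx, by omega⟩
    · rintro (⟨hx, h⟩ | ⟨hx, h⟩) <;> exact ⟨hx, by omega⟩
  rw [h1, Finset.card_union_of_disjoint, Finset.filter_eq']
  · split <;> simp
  · rw [Finset.disjoint_left]
    intro x hx h; simp only [Finset.mem_filter] at hx h; omega

lemma eq_of_cnt_eq {A B : Finset ℕ} (h : ∀ m, cnt A m = cnt B m) : A = B := by
  have key : ∀ m, (m ∈ A ↔ m ∈ B) := by
    intro m
    cases m with
    | zero =>
      have := h 0
      rw [cnt_zero_eq, cnt_zero_eq] at this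
      by_cases h1 : 0 ∈ A <;> by_cases h2 : 0 ∈ B <;> simp_all
    | succ k =>
      have h1 := h (k + 1)
      have h2 := h k
      rw [cnt_succ, cnt_succ] at h1
      by_cases hA : (k+1) ∈ A <;> by_cases hB : (k+1) ∈ B <;> simp_all
  ext m; exact key m

lemma list_sorted_getD_le_iff (m : ℕ) :
    ∀ (l : List ℕ), l.Pairwise (· ≤ ·) → ∀ k, k < l.length →
      (l.getD k 0 ≤ m ↔ k < l.countP (fun x => decide (x ≤ m))) := by
  intro l
  induction l with
  | nil => intro _ k hk; simp at hk
  | cons x t ih =>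
    intro hs k hk
    have hxt : ∀ y ∈ t, x ≤ y := fun y hy => List.rel_of_pairwise_cons hs hy
    have hts : t.Pairwise (· ≤ ·) := hs.of_cons
    rw [List.countP_cons]
    cases k with
    | zero =>
      simp only [List.getD_cons_zero]
      by_cases hxm : x ≤ m
      · simp [hxm]
      · have ht0 : t.countP (fun x => decide (x ≤ m)) = 0 := by
          rw [List.countP_eq_zero]
          intro y hy
          have := hxt y hy
          simp only [decide_eq_true_eq]
          omega
        simp [hxm, ht0]
    | succ k =>
      simp only [List.getD_cons_succ]
      have hk' : k < t.length := by simpa using hk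
      by_cases hxm : x ≤ m
      · rw [ih hts k hk']
        simp only [hxm, decide_eq_true_eq, if_true, eq_self_iff_true]
        omega
      · have ht0 : t.countP (fun x => decide (x ≤ m)) = 0 := by
          rw [List.countP_eq_zero]
          intro y hy
          have := hxt y hy
          simp only [decide_eq_true_eq]
          omega
        have : ¬ t.getD k 0 ≤ m := by
          have hmem : t.getD k 0 ∈ t := by
            rw [List.getD_eq_getElem _ _ hk']
            exact List.getElem_mem _
          have := hxt _ hmem
          omega
        refine iff_of_false this ?_
        rw [if_neg (by simpa using hxm), ht0]
        omega

lemma cnt_eq_countP (A : Finset ℕ) (m : ℕ) :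
    cnt A m = (A.sort (· ≤ ·)).countP (fun x => decide (x ≤ m)) := by
  unfold cnt
  rw [Finset.card_filter]
  rw [← Multiset.coe_countP, Finset.sort_eq]
  rw [Multiset.countP_eq_card_filter]
  simp [Finset.filter, Finset.card]

lemma bridge (A : Finset ℕ) (m k : ℕ) (hk : k < A.card) :
    nthSmall A k ≤ m ↔ k < cnt A m := by
  rw [cnt_eq_countP]
  exact list_sorted_getD_le_iff m _ (Finset.pairwise_sort _ _) k
    (by rwa [Finset.length_sort])

lemma galeLe_iff {A B : Finset ℕ} :
    galeLe A B ↔ B.card ≤ A.card ∧ ∀ m, cnt B m ≤ cnt A m := by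
  constructor
  · rintro ⟨hcard, h⟩
    refine ⟨hcard, fun m => ?_⟩
    rcases Nat.eq_zero_or_pos (cnt B m) with h0 | h0
    · omega
    · set k := cnt B m - 1 with hkdef
      have hkB : k < B.card := by
        have := Finset.card_filter_le B (· ≤ m)
        unfold cnt at *
        omega
      have h1 : nthSmall B k ≤ m := (bridge B m k hkB).mpr (by omega)
      have h2 : nthSmall A k ≤ m := le_trans (h k hkB) h1
      have := (bridge A m k (lt_of_lt_of_le hkB hcard)).mp h2
      omega
  · rintro ⟨hcard, h⟩
    refine ⟨hcard, fun k hk => ?_⟩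
    have h1 : nthSmall B k ≤ nthSmall B k := le_refl _
    have h2 := (bridge B (nthSmall B k) k hk).mp h1
    have h3 := lt_of_lt_of_le h2 (h _)
    exact (bridge A (nthSmall B k) k (lt_of_lt_of_le hk hcard)).mpr h3

lemma galeLe_refl (A : Finset ℕ) : galeLe A A := ⟨le_refl _, fun _ _ => le_refl _⟩

lemma galeLe_trans {A B C : Finset ℕ} (h1 : galeLe A B) (h2 : galeLe B C) : galeLe A C := by
  rw [galeLe_iff] at *
  exact ⟨le_trans h2.1 h1.1, fun m => le_trans (h2.2 m) (h1.2 m)⟩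

lemma galeLe_antisymm {A B : Finset ℕ} (h1 : galeLe A B) (h2 : galeLe B A) : A = B := by
  rw [galeLe_iff] at h1 h2
  exact eq_of_cnt_eq (fun m => le_antisymm (h2.2 m) (h1.2 m))

lemma galeLe_bot {n : ℕ} {A : Finset ℕ} (hA : A ⊆ Finset.Icc 1 n) : galeLe (Finset.Icc 1 n) A := by
  rw [galeLe_iff]
  constructor
  · exact Finset.card_le_card hA
  · exact fun m => cnt_mono hA m

lemma galeLe_top {n : ℕ} {A : Finset ℕ} (hA : A ⊆ Finset.Icc 1 n) (hne : A.Nonempty) :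
    galeLe A {n} := by
  rw [galeLe_iff]
  constructor
  · simpa using Finset.card_pos.mpr hne
  · intro m
    unfold cnt
    rcases Nat.lt_or_ge m n with h | h
    · have : ({n} : Finset ℕ).filter (· ≤ m) = ∅ := by
        ext x; simp; omega
      simp [this]
    · have : ({n} : Finset ℕ).filter (· ≤ m) = {n} := by
        ext x; simp; omega
      rw [this]
      simp only [Finset.card_singleton]
      obtain ⟨a, ha⟩ := hne
      have h1 : a ∈ A.filter (· ≤ m) := by
        have := hA ha
        simp only [Finset.mem_Icc] at this
        simp only [Finset.mem_filter]
        exact ⟨ha, by omega⟩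
      exact Finset.card_pos.mpr ⟨a, h1⟩

/-- Rank function on subsets of `[n]`. -/
def rho (n : ℕ) (A : Finset ℕ) : ℕ := ∑ m ∈ Finset.range (n + 1), (n + 1 - cnt A m)

lemma rho_mono {n : ℕ} {A B : Finset ℕ} (h : galeLe A B) : rho n A ≤ rho n B := by
  rw [galeLe_iff] at h
  exact Finset.sum_le_sum (fun m _ => Nat.sub_le_sub_left (h.2 m) _)

lemma cnt_congr_of_subset_Icc {n : ℕ} {A : Finset ℕ} (hA : A ⊆ Finset.Icc 1 n) {m : ℕ}
    (hm : n ≤ m) : cnt A m = cnt A n := by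
  rw [cnt_eq_card hA hm, cnt_eq_card hA (le_refl n)]

lemma rho_strict_mono {n : ℕ} {A B : Finset ℕ} (hA : A ⊆ Finset.Icc 1 n)
    (hB : B ⊆ Finset.Icc 1 n) (h : galeLe A B) (hne : A ≠ B) : rho n A < rho n B := by
  rw [galeLe_iff] at h
  have hex : ∃ m ∈ Finset.range (n + 1), cnt B m < cnt A m := by
    by_contra hc
    push_neg at hc
    apply hne
    apply eq_of_cnt_eq
    intro m
    rcases Nat.lt_or_ge m (n + 1) with hm | hm
    · have := hc m (Finset.mem_range.mpr hm)
      have := h.2 m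
      omega
    · rw [cnt_congr_of_subset_Icc hA (by omega), cnt_congr_of_subset_Icc hB (by omega)]
      have := hc n (Finset.mem_range.mpr (by omega))
      have := h.2 n
      omega
  obtain ⟨m0, hm0, hlt⟩ := hex
  apply Finset.sum_lt_sum
  · exact fun m _ => Nat.sub_le_sub_left (h.2 m) _
  · refine ⟨m0, hm0, ?_⟩
    have hcA : cnt A m0 ≤ n := by
      calc cnt A m0 ≤ A.card := cnt_le_card A m0
        _ ≤ (Finset.Icc 1 n).card := Finset.card_le_card hA
        _ = n := by simp
    omega

lemma two_mul_choose (n : ℕ) : 2 * (n + 1).choose 2 = n * (n + 1) := by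
  rw [Nat.choose_two_right]
  have h : 2 ∣ (n + 1) * n := by
    rcases Nat.even_or_odd n with h | h
    · exact Dvd.dvd.mul_left h.two_dvd _
    · exact Dvd.dvd.mul_right h.add_one.two_dvd _
  simp only [Nat.add_sub_cancel]
  exact (Nat.mul_div_cancel' h).trans (mul_comm _ _)

lemma sum_Icc_compl (n : ℕ) :
    ∑ a ∈ Finset.Icc 1 n, (n + 1 - a) = (n + 1).choose 2 := by
  have h1 : Finset.Icc 1 n = (Finset.range n).image (· + 1) := by
    ext x
    simp only [Finset.mem_Icc, Finset.mem_image, Finset.mem_range]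
    constructor
    · rintro ⟨ha, hb⟩; exact ⟨x - 1, by omega, by omega⟩
    · rintro ⟨i, hi, rfl⟩; omega
  rw [h1, Finset.sum_image (by intro x _ y _ h; simp only at h; omega)]
  have h2 : ∀ i ∈ Finset.range n, n + 1 - (i + 1) = n - i := by
    intro i hi; omega
  rw [Finset.sum_congr rfl h2]
  have h3 : ∑ i ∈ Finset.range n, (n - i) = ∑ i ∈ Finset.range n, (i + 1) := by
    have := Finset.sum_range_reflect (fun j => j + 1) n
    rw [← this]
    apply Finset.sum_congr rfl
    intro i hi
    simp only [Finset.mem_range] at hi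
    omega
  rw [h3, Finset.sum_add_distrib]
  have h4 := Finset.sum_range_id_mul_two n
  have h5 := two_mul_choose n
  simp only [Finset.sum_const, Finset.card_range, smul_eq_mul, mul_one]
  have h6 : n * (n + 1) = n * (n - 1) + 2 * n := by
    cases n with
    | zero => simp
    | succ k => simp only [Nat.succ_sub_one]; ring
  omega

lemma sum_cnt_eq {A : Finset ℕ} {n : ℕ} (hA : A ⊆ Finset.Icc 1 n) :
    ∑ m ∈ Finset.range (n + 1), cnt A m = ∑ a ∈ A, (n + 1 - a) := by
  unfold cnt
  have h1 : ∀ m ∈ Finset.range (n+1), (A.filter (· ≤ m)).card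
      = ∑ a ∈ A, if a ≤ m then 1 else 0 := by
    intro m _
    rw [Finset.card_filter]
  rw [Finset.sum_congr rfl h1, Finset.sum_comm]
  apply Finset.sum_congr rfl
  intro a ha
  have haIcc := hA ha
  simp only [Finset.mem_Icc] at haIcc
  have h2 : ∑ m ∈ Finset.range (n+1), (if a ≤ m then 1 else 0)
      = ((Finset.range (n+1)).filter (fun m => a ≤ m)).card := by
    rw [Finset.card_filter]
  rw [h2]
  have h3 : (Finset.range (n+1)).filter (fun m => a ≤ m) = Finset.Ico a (n+1) := by
    ext x; simp [Finset.mem_Ico, Finset.mem_filter]; omega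
  rw [h3, Nat.card_Ico]

lemma rho_add_sum {n : ℕ} {A : Finset ℕ} (hA : A ⊆ Finset.Icc 1 n) :
    rho n A + ∑ m ∈ Finset.range (n + 1), cnt A m = (n + 1) * (n + 1) := by
  unfold rho
  rw [← Finset.sum_add_distrib]
  have h1 : ∀ m ∈ Finset.range (n+1), (n + 1 - cnt A m) + cnt A m = n + 1 := by
    intro m _
    have : cnt A m ≤ n := by
      calc cnt A m ≤ A.card := cnt_le_card A m
        _ ≤ (Finset.Icc 1 n).card := Finset.card_le_card hA
        _ = n := by simp
    omega
  rw [Finset.sum_congr rfl h1]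
  simp [Finset.sum_const, mul_comm]

lemma sum_cnt_le {n : ℕ} {A : Finset ℕ} (hA : A ⊆ Finset.Icc 1 n) :
    ∑ m ∈ Finset.range (n + 1), cnt A m ≤ (n + 1).choose 2 := by
  rw [sum_cnt_eq hA, ← sum_Icc_compl n]
  exact Finset.sum_le_sum_of_subset hA

lemma one_le_sum_cnt {n : ℕ} {A : Finset ℕ} (hA : A ⊆ Finset.Icc 1 n) (hne : A.Nonempty) :
    1 ≤ ∑ m ∈ Finset.range (n + 1), cnt A m := by
  have h1 : cnt A n = A.card := cnt_eq_card hA (le_refl n)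
  have h2 : 1 ≤ cnt A n := by rw [h1]; exact Finset.card_pos.mpr hne
  calc 1 ≤ cnt A n := h2
    _ ≤ _ := Finset.single_le_sum (fun m _ => Nat.zero_le _)
        (Finset.mem_range.mpr (by omega))

lemma rho_lower {n : ℕ} {A : Finset ℕ} (hA : A ⊆ Finset.Icc 1 n) :
    (n + 1) * (n + 1) - (n + 1).choose 2 ≤ rho n A := by
  have := rho_add_sum hA
  have := sum_cnt_le hA
  omega

lemma rho_upper {n : ℕ} {A : Finset ℕ} (hA : A ⊆ Finset.Icc 1 n) (hne : A.Nonempty) :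
    rho n A ≤ (n + 1) * (n + 1) - 1 := by
  have := rho_add_sum hA
  have := one_le_sum_cnt hA hne
  omega

lemma rho_bot (n : ℕ) : rho n (Finset.Icc 1 n) = (n + 1) * (n + 1) - (n + 1).choose 2 := by
  have h0 : ∑ m ∈ Finset.range (n + 1), cnt (Finset.Icc 1 n) m = (n + 1).choose 2 := by
    rw [sum_cnt_eq (le_refl _)]
    exact sum_Icc_compl n
  have h1 := rho_add_sum (le_refl (Finset.Icc 1 n))
  have h2 : (n+1).choose 2 ≤ (n+1)*(n+1) := by
    have := two_mul_choose n
    nlinarith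
  omega

lemma rho_top (n : ℕ) (hn : 1 ≤ n) : rho n ({n} : Finset ℕ) = (n + 1) * (n + 1) - 1 := by
  have hsub : ({n} : Finset ℕ) ⊆ Finset.Icc 1 n := by
    intro x hx; simp at hx; simp [hx]; omega
  have h0 : ∑ m ∈ Finset.range (n + 1), cnt ({n} : Finset ℕ) m = 1 := by
    rw [sum_cnt_eq hsub]
    simp
  have h1 := rho_add_sum hsub
  have h2 : 1 ≤ (n+1)*(n+1) := by nlinarith
  omega
lemma rho_succ_of {n : ℕ} {A C : Finset ℕ} {e : ℕ} (he : e ≤ n)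
    (h1 : ∀ m, m ≤ n → m ≠ e → cnt C m = cnt A m)
    (h2 : cnt C e + 1 = cnt A e) (h3 : cnt A e ≤ n + 1) :
    rho n C = rho n A + 1 := by
  unfold rho
  have hmem : e ∈ Finset.range (n + 1) := Finset.mem_range.mpr (by omega)
  rw [← Finset.sum_erase_add _ _ hmem, ← Finset.sum_erase_add _ _ hmem]
  have hs : ∑ m ∈ (Finset.range (n+1)).erase e, (n + 1 - cnt C m)
      = ∑ m ∈ (Finset.range (n+1)).erase e, (n + 1 - cnt A m) :=
    Finset.sum_congr rfl (fun m hm => by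
      rw [h1 m (by have := Finset.mem_range.mp (Finset.mem_of_mem_erase hm); omega)
        (Finset.ne_of_mem_erase hm)])
  rw [hs]
  omega

lemma cnt_pos_of_mem {A : Finset ℕ} {a m : ℕ} (ha : a ∈ A) (h : a ≤ m) : 1 ≤ cnt A m :=
  Finset.card_pos.mpr ⟨a, Finset.mem_filter.mpr ⟨ha, h⟩⟩

lemma step {n : ℕ} {A B : Finset ℕ} (hA : A.Nonempty) (hA' : A ⊆ Finset.Icc 1 n)
    (hB : B.Nonempty) (hB' : B ⊆ Finset.Icc 1 n) (h : galeLe A B) (hne : A ≠ B) :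
    ∃ C : Finset ℕ, C.Nonempty ∧ C ⊆ Finset.Icc 1 n ∧ galeLe A C ∧ galeLe C B ∧
      rho n C = rho n A + 1 := by
  obtain ⟨hcard, hcnt⟩ := galeLe_iff.mp h
  have hex : ∃ m, cnt B m < cnt A m := by
    by_contra hc
    push_neg at hc
    exact hne (eq_of_cnt_eq (fun m => le_antisymm (hc m) (hcnt m)))
  classical
  set m0 := Nat.find hex with hm0def
  have hP : cnt B m0 < cnt A m0 := Nat.find_spec hex
  have hmin : ∀ k < m0, cnt B k = cnt A k := fun k hk =>
    le_antisymm (hcnt k) (by have := Nat.find_min hex hk; omega)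
  have hm0pos : 1 ≤ m0 := by
    by_contra hcon
    have h0 : m0 = 0 := by omega
    rw [h0] at hP
    have h1 : 1 ≤ cnt A 0 := by omega
    rw [cnt_zero_eq] at h1
    by_cases hmem : 0 ∈ A
    · have := hA' hmem; simp at this
    · rw [if_neg hmem] at h1; omega
  have hm0A : m0 ∈ A := by
    obtain ⟨k, hk⟩ : ∃ k, m0 = k + 1 := ⟨m0 - 1, by omega⟩
    have h1 : cnt B k = cnt A k := hmin k (by omega)
    have h2 := cnt_succ A k
    have h3 := cnt_succ B k
    rw [hk] at hP ⊢
    by_contra hcon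
    rw [if_neg hcon] at h2
    have h4 : cnt B (k+1) ≤ cnt B k + (if (k+1) ∈ B then 1 else 0) := le_of_eq h3
    split at h4 <;> omega
  have hm0n : m0 ≤ n := by
    have := hA' hm0A; simp only [Finset.mem_Icc] at this; omega
  -- the run top e
  set E := (Finset.Icc m0 n).filter (fun x => Finset.Icc m0 x ⊆ A) with hEdef
  have hEne : E.Nonempty := by
    refine ⟨m0, Finset.mem_filter.mpr ⟨Finset.mem_Icc.mpr ⟨le_refl _, hm0n⟩, ?_⟩⟩
    rw [Finset.Icc_self]
    simpa using hm0A
  set e := E.max' hEne with hedef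
  have heE : e ∈ E := E.max'_mem hEne
  have heIcc : m0 ≤ e ∧ e ≤ n := by
    have := (Finset.mem_filter.mp heE).1; simpa using this
  have herun : Finset.Icc m0 e ⊆ A := (Finset.mem_filter.mp heE).2
  have heA : e ∈ A := herun (Finset.mem_Icc.mpr ⟨heIcc.1, le_refl _⟩)
  have hetop : e + 1 ≤ n → (e + 1) ∉ A := by
    intro hen hcon
    have hE2 : e + 1 ∈ E := by
      refine Finset.mem_filter.mpr ⟨Finset.mem_Icc.mpr ⟨by omega, hen⟩, ?_⟩
      intro x hx
      simp only [Finset.mem_Icc] at hx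
      rcases Nat.lt_or_ge x (e + 1) with h' | h'
      · exact herun (Finset.mem_Icc.mpr ⟨hx.1, by omega⟩)
      · have : x = e + 1 := by omega
        rwa [this]
    have := E.le_max' _ hE2
    omega
  -- key inequality
  have key : ∀ m, m0 ≤ m → m ≤ e → cnt B m < cnt A m := by
    intro m hm1 hm2
    have h1 : cnt A m0 + (m - m0) ≤ cnt A m := by
      have hsub : A.filter (· ≤ m0) ∪ Finset.Icc (m0+1) m ⊆ A.filter (· ≤ m) := by
        intro x hx
        rcases Finset.mem_union.mp hx with hx | hx
        · have := Finset.mem_filter.mp hx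
          exact Finset.mem_filter.mpr ⟨this.1, by omega⟩
        · simp only [Finset.mem_Icc] at hx
          refine Finset.mem_filter.mpr ⟨herun (Finset.mem_Icc.mpr ⟨by omega, by omega⟩), by omega⟩
      have hdisj : Disjoint (A.filter (· ≤ m0)) (Finset.Icc (m0+1) m) := by
        rw [Finset.disjoint_left]
        intro x hx1 hx2
        simp only [Finset.mem_filter] at hx1
        simp only [Finset.mem_Icc] at hx2
        omega
      calc cnt A m0 + (m - m0)
          = (A.filter (· ≤ m0)).card + (Finset.Icc (m0+1) m).card := by
            unfold cnt; rw [Nat.card_Icc]; omega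
        _ = (A.filter (· ≤ m0) ∪ Finset.Icc (m0+1) m).card :=
            (Finset.card_union_of_disjoint hdisj).symm
        _ ≤ _ := Finset.card_le_card hsub
    have h2 : cnt B m ≤ cnt B m0 + (m - m0) := by
      have hsub : B.filter (· ≤ m) ⊆ B.filter (· ≤ m0) ∪ Finset.Icc (m0+1) m := by
        intro x hx
        have := Finset.mem_filter.mp hx
        rcases Nat.lt_or_ge m0 x with h' | h'
        · exact Finset.mem_union_right _ (Finset.mem_Icc.mpr ⟨by omega, this.2⟩)
        · exact Finset.mem_union_left _ (Finset.mem_filter.mpr ⟨this.1, h'⟩)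
      calc cnt B m ≤ (B.filter (· ≤ m0) ∪ Finset.Icc (m0+1) m).card :=
            Finset.card_le_card hsub
        _ ≤ (B.filter (· ≤ m0)).card + (Finset.Icc (m0+1) m).card := Finset.card_union_le _ _
        _ = cnt B m0 + (m - m0) := by unfold cnt; rw [Nat.card_Icc]; omega
    omega
  have hAcard : A.card ≤ n := by
    calc A.card ≤ (Finset.Icc 1 n).card := Finset.card_le_card hA'
      _ = n := by simp
  rcases eq_or_lt_of_le heIcc.2 with hen | hen
  · -- e = n : delete n
    have hnA : n ∈ A := hen ▸ heA
    have hBA : B.card < A.card := by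
      have := key n hm0n (le_of_eq hen.symm)
      rwa [cnt_eq_card hA' (le_refl n), cnt_eq_card hB' (le_refl n)] at this
    have hcntC : ∀ m, cnt (A.erase n) m = if n ≤ m then cnt A m - 1 else cnt A m := by
      intro m
      unfold cnt
      rw [Finset.filter_erase]
      split
      · next hnm =>
          have hmem : n ∈ A.filter (· ≤ m) := Finset.mem_filter.mpr ⟨hnA, hnm⟩
          rw [Finset.card_erase_of_mem hmem]
      · next hnm =>
          rw [Finset.erase_eq_of_notMem]
          intro hcon
          exact hnm (Finset.mem_filter.mp hcon).2
    refine ⟨A.erase n, ?_, (Finset.erase_subset _ _).trans hA', ?_, ?_, ?_⟩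
    · rw [← Finset.card_pos, Finset.card_erase_of_mem hnA]
      have := Finset.card_pos.mpr hB
      omega
    · rw [galeLe_iff]
      constructor
      · exact Finset.card_le_card (Finset.erase_subset _ _)
      · intro m
        rw [hcntC m]
        split <;> omega
    · rw [galeLe_iff]
      rw [Finset.card_erase_of_mem hnA]
      refine ⟨by omega, fun m => ?_⟩
      rw [hcntC m]
      split
      · next hnm =>
          rw [cnt_eq_card hA' hnm, cnt_eq_card hB' hnm]
          omega
      · exact hcnt m
    · refine rho_succ_of (le_refl n) (fun m hmn hm => ?_) ?_ ?_
      · rw [hcntC m, if_neg (by omega)]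
      · rw [hcntC n, if_pos (le_refl n), cnt_eq_card hA' (le_refl n)]
        have := Finset.card_pos.mpr hA
        omega
      · calc cnt A n ≤ A.card := cnt_le_card A n
          _ ≤ n + 1 := by omega
  · -- e < n : bump e to e + 1
    have hnotA : (e + 1) ∉ A := hetop (by omega)
    set C := insert (e + 1) (A.erase e) with hCdef
    have hcardC : C.card = A.card := by
      rw [hCdef, Finset.card_insert_of_notMem, Finset.card_erase_of_mem heA]
      · have := Finset.card_pos.mpr hA; omega
      · intro hcon
        exact hnotA (Finset.mem_of_mem_erase hcon)
    have hcntAe : 1 ≤ cnt A e := cnt_pos_of_mem heA (le_refl e)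
    have hcntC : ∀ m, cnt C m = if m = e then cnt A m - 1 else cnt A m := by
      intro m
      unfold cnt
      rw [hCdef, Finset.filter_insert, Finset.filter_erase]
      rcases Nat.lt_or_ge m e with h' | h'
      · rw [if_neg (by omega), if_neg (by omega), Finset.erase_eq_of_notMem]
        intro hcon
        have := (Finset.mem_filter.mp hcon).2
        omega
      · rcases eq_or_lt_of_le h' with h'' | h''
        · rw [if_neg (by omega), if_pos h''.symm,
            Finset.card_erase_of_mem (Finset.mem_filter.mpr ⟨heA, by omega⟩)]
        · rw [if_pos (by omega), if_neg (by omega),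
            Finset.card_insert_of_notMem, Finset.card_erase_of_mem
              (Finset.mem_filter.mpr ⟨heA, by omega⟩)]
          · have : 1 ≤ (A.filter (· ≤ m)).card := cnt_pos_of_mem heA (by omega)
            omega
          · intro hcon
            exact hnotA (Finset.mem_filter.mp (Finset.mem_of_mem_erase hcon)).1
    refine ⟨C, ?_, ?_, ?_, ?_, ?_⟩
    · rw [← Finset.card_pos, hcardC]
      exact Finset.card_pos.mpr hA
    · rw [hCdef]
      refine Finset.insert_subset ?_ ((Finset.erase_subset _ _).trans hA')
      simp only [Finset.mem_Icc]
      omega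
    · rw [galeLe_iff, hcardC]
      refine ⟨le_refl _, fun m => ?_⟩
      rw [hcntC m]
      split <;> omega
    · rw [galeLe_iff, hcardC]
      refine ⟨hcard, fun m => ?_⟩
      rw [hcntC m]
      split
      · next hme =>
          rw [hme]
          have := key e heIcc.1 (le_refl e)
          omega
      · exact hcnt m
    · refine rho_succ_of heIcc.2 (fun m _ hm => by rw [hcntC m, if_neg hm]) ?_ ?_
      · rw [hcntC e, if_pos rfl]
        omega
      · calc cnt A e ≤ A.card := cnt_le_card A e
          _ ≤ n + 1 := by omega

lemma chain_rho_injOn {n : ℕ} {𝒞 : Finset (Finset ℕ)} (h : IsGaleChain n 𝒞) :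
    Set.InjOn (rho n) 𝒞 := by
  intro A hA B hB heq
  by_contra hne
  rcases h.2 A hA B hB with h' | h'
  · have := rho_strict_mono (h.1 A hA).2 (h.1 B hB).2 h' hne
    omega
  · have := rho_strict_mono (h.1 B hB).2 (h.1 A hA).2 h' (Ne.symm hne)
    omega

lemma choose_succ_le (n : ℕ) : (n + 1).choose 2 + 1 ≤ (n + 1) * (n + 1) := by
  nlinarith [two_mul_choose n]

lemma chain_card_le {n : ℕ} {𝒞 : Finset (Finset ℕ)} (h : IsGaleChain n 𝒞) :
    𝒞.card ≤ (n + 1).choose 2 := by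
  have himg : (𝒞.image (rho n)).card = 𝒞.card :=
    Finset.card_image_of_injOn (chain_rho_injOn h)
  have hsub : 𝒞.image (rho n) ⊆
      Finset.Icc ((n+1)*(n+1) - (n+1).choose 2) ((n+1)*(n+1) - 1) := by
    intro v hv
    obtain ⟨A, hA, rfl⟩ := Finset.mem_image.mp hv
    exact Finset.mem_Icc.mpr ⟨rho_lower (h.1 A hA).2, rho_upper (h.1 A hA).2 (h.1 A hA).1⟩
  have hcard := Finset.card_le_card hsub
  rw [himg, Nat.card_Icc] at hcard
  have := choose_succ_le n
  omega

lemma gale_chain_insert_bot {n : ℕ} {𝒞 : Finset (Finset ℕ)} (hn : 1 ≤ n)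
    (h : IsGaleChain n 𝒞) : IsGaleChain n (insert (Finset.Icc 1 n) 𝒞) := by
  constructor
  · intro A hA
    rcases Finset.mem_insert.mp hA with rfl | hA
    · exact ⟨⟨1, Finset.mem_Icc.mpr ⟨le_refl _, hn⟩⟩, le_refl _⟩
    · exact h.1 A hA
  · intro A hA B hB
    rcases Finset.mem_insert.mp hA with rfl | hA <;>
      rcases Finset.mem_insert.mp hB with rfl | hB
    · left; exact galeLe_refl _
    · left; exact galeLe_bot (h.1 B hB).2
    · right; exact galeLe_bot (h.1 A hA).2
    · exact h.2 A hA B hB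

lemma gale_chain_insert_top {n : ℕ} {𝒞 : Finset (Finset ℕ)} (hn : 1 ≤ n)
    (h : IsGaleChain n 𝒞) : IsGaleChain n (insert ({n} : Finset ℕ) 𝒞) := by
  constructor
  · intro A hA
    rcases Finset.mem_insert.mp hA with rfl | hA
    · refine ⟨⟨n, Finset.mem_singleton_self n⟩, ?_⟩
      intro x hx
      simp only [Finset.mem_singleton] at hx
      subst hx
      exact Finset.mem_Icc.mpr ⟨hn, le_refl _⟩
    · exact h.1 A hA
  · intro A hA B hB
    rcases Finset.mem_insert.mp hA with rfl | hA <;>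
      rcases Finset.mem_insert.mp hB with rfl | hB
    · left; exact galeLe_refl _
    · right; exact galeLe_top (h.1 B hB).2 (h.1 B hB).1
    · left; exact galeLe_top (h.1 A hA).2 (h.1 A hA).1
    · exact h.2 A hA B hB

lemma maximal_chain_card {n : ℕ} {𝒞 : Finset (Finset ℕ)} (h : IsMaximalGaleChain n 𝒞) :
    𝒞.card = (n + 1).choose 2 := by
  obtain ⟨hchain, hmax⟩ := h
  by_contra hne
  have hlt : 𝒞.card < (n + 1).choose 2 :=
    lt_of_le_of_ne (chain_card_le hchain) hne
  have hn : 1 ≤ n := by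
    by_contra hn
    have h0 : n = 0 := by omega
    subst h0
    have : (0 + 1).choose 2 = 0 := by decide
    omega
  -- bot must be in 𝒞
  have hbot : Finset.Icc 1 n ∈ 𝒞 := by
    by_contra hno
    have heq := hmax _ (gale_chain_insert_bot hn hchain) (Finset.subset_insert _ _)
    rw [← heq] at hno
    exact hno (Finset.mem_insert_self _ _)
  have htop : ({n} : Finset ℕ) ∈ 𝒞 := by
    by_contra hno
    have heq := hmax _ (gale_chain_insert_top hn hchain) (Finset.subset_insert _ _)
    rw [← heq] at hno
    exact hno (Finset.mem_insert_self _ _)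
  -- find a missing rank value
  set lo := (n+1)*(n+1) - (n+1).choose 2 with hlodef
  set hi := (n+1)*(n+1) - 1 with hhidef
  set R := 𝒞.image (rho n) with hRdef
  have hRcard : R.card = 𝒞.card := Finset.card_image_of_injOn (chain_rho_injOn hchain)
  have hRsub : R ⊆ Finset.Icc lo hi := by
    intro v hv
    obtain ⟨A, hA, rfl⟩ := Finset.mem_image.mp hv
    exact Finset.mem_Icc.mpr
      ⟨rho_lower (hchain.1 A hA).2, rho_upper (hchain.1 A hA).2 (hchain.1 A hA).1⟩
  have hIcc_card : (Finset.Icc lo hi).card = (n + 1).choose 2 := by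
    rw [Nat.card_Icc]
    have := choose_succ_le n
    omega
  have hex : ∃ v ∈ Finset.Icc lo hi, v ∉ R := by
    by_contra hc
    push_neg at hc
    have := Finset.card_le_card hc
    omega
  obtain ⟨v, hvIcc, hvR⟩ := hex
  obtain ⟨hv1, hv2⟩ := Finset.mem_Icc.mp hvIcc
  have hrho_bot : rho n (Finset.Icc 1 n) = lo := rho_bot n
  have hrho_top : rho n ({n} : Finset ℕ) = hi := rho_top n hn
  have hlov : lo < v := by
    rcases eq_or_lt_of_le hv1 with h' | h'
    · exfalso; apply hvR; rw [← h', ← hrho_bot]; exact Finset.mem_image_of_mem _ hbot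
    · exact h'
  have hvhi : v < hi := by
    rcases eq_or_lt_of_le hv2 with h' | h'
    · exfalso; apply hvR; rw [h', ← hrho_top]; exact Finset.mem_image_of_mem _ htop
    · exact h'
  -- pick A below v maximal, B above v minimal
  set S1 := 𝒞.filter (fun X => rho n X < v) with hS1def
  set S2 := 𝒞.filter (fun X => v < rho n X) with hS2def
  have hS1ne : S1.Nonempty :=
    ⟨_, Finset.mem_filter.mpr ⟨hbot, by rw [hrho_bot]; exact hlov⟩⟩
  have hS2ne : S2.Nonempty :=
    ⟨_, Finset.mem_filter.mpr ⟨htop, by rw [hrho_top]; exact hvhi⟩⟩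
  obtain ⟨A, hAS1, hAmax⟩ := Finset.exists_max_image S1 (rho n) hS1ne
  obtain ⟨B, hBS2, hBmin⟩ := Finset.exists_min_image S2 (rho n) hS2ne
  have hA𝒞 : A ∈ 𝒞 := (Finset.mem_filter.mp hAS1).1
  have hB𝒞 : B ∈ 𝒞 := (Finset.mem_filter.mp hBS2).1
  have hrhoA : rho n A < v := (Finset.mem_filter.mp hAS1).2
  have hrhoB : v < rho n B := (Finset.mem_filter.mp hBS2).2
  have hABne : A ≠ B := by
    intro h'; rw [h'] at hrhoA; omega
  have hgAB : galeLe A B := by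
    rcases hchain.2 A hA𝒞 B hB𝒞 with h' | h'
    · exact h'
    · exfalso
      have := rho_mono (n := n) h'
      omega
  obtain ⟨C, hCne, hCsub, hgAC, hgCB, hCrho⟩ :=
    step (hchain.1 A hA𝒞).1 (hchain.1 A hA𝒞).2 (hchain.1 B hB𝒞).1 (hchain.1 B hB𝒞).2
      hgAB hABne
  have hC𝒞 : C ∉ 𝒞 := by
    intro hC
    rcases Nat.lt_trichotomy (rho n C) v with h' | h' | h'
    · have := hAmax C (Finset.mem_filter.mpr ⟨hC, h'⟩)
      omega
    · exact hvR (by rw [← h']; exact Finset.mem_image_of_mem _ hC)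
    · omega
  -- insert C gives a bigger chain
  have hchain' : IsGaleChain n (insert C 𝒞) := by
    have hcmp : ∀ Y ∈ 𝒞, galeLe C Y ∨ galeLe Y C := by
      intro Y hY
      rcases hchain.2 Y hY A hA𝒞 with h' | h'
      · right; exact galeLe_trans h' hgAC
      · by_cases hYA : Y = A
        · right; rw [hYA]; exact hgAC
        · rcases hchain.2 B hB𝒞 Y hY with h'' | h''
          · left; exact galeLe_trans hgCB h''
          · by_cases hYB : Y = B
            · left; rw [hYB]; exact hgCB
            · exfalso
              have hs1 := rho_strict_mono (hchain.1 A hA𝒞).2 (hchain.1 Y hY).2 h'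
                (Ne.symm hYA)
              have hs2 := rho_strict_mono (hchain.1 Y hY).2 (hchain.1 B hB𝒞).2 h'' hYB
              rcases Nat.lt_trichotomy (rho n Y) v with h3 | h3 | h3
              · have := hAmax Y (Finset.mem_filter.mpr ⟨hY, h3⟩)
                omega
              · exact hvR (by rw [← h3]; exact Finset.mem_image_of_mem _ hY)
              · have := hBmin Y (Finset.mem_filter.mpr ⟨hY, h3⟩)
                omega
    constructor
    · intro X hX
      rcases Finset.mem_insert.mp hX with rfl | hX
      · exact ⟨hCne, hCsub⟩
      · exact hchain.1 X hX
    · intro X hX Y hY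
      rcases Finset.mem_insert.mp hX with hX' | hX <;>
        rcases Finset.mem_insert.mp hY with hY' | hY
      · rw [hX', hY']; left; exact galeLe_refl _
      · rw [hX']; exact hcmp Y hY
      · rw [hY']; exact (hcmp X hX).symm
      · exact hchain.2 X hX Y hY
  have heq := hmax _ hchain' (Finset.subset_insert _ _)
  rw [← heq] at hC𝒞
  exact hC𝒞 (Finset.mem_insert_self _ _)

lemma maximal_iff_card {n : ℕ} {𝒞 : Finset (Finset ℕ)} (h : IsGaleChain n 𝒞) :
    IsMaximalGaleChain n 𝒞 ↔ 𝒞.card = (n + 1).choose 2 := by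
  constructor
  · exact maximal_chain_card
  · intro hc
    refine ⟨h, fun 𝒟 h𝒟 hsub => ?_⟩
    have h1 := chain_card_le h𝒟
    exact (Finset.eq_of_subset_of_card_le hsub (by omega)).symm

section SSYT

variable {μ : YoungDiagram} (T : SemistandardYoungTableau μ)

lemma col_injOn (j : ℕ) : Set.InjOn (fun i => T i j) (Finset.range (μ.colLen j)) := by
  intro i1 h1 i2 h2 heq
  simp only [Finset.coe_range, Set.mem_Iio] at h1 h2
  have heq' : T i1 j = T i2 j := heq
  by_contra hne
  rcases Nat.lt_or_ge i1 i2 with h' | h'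
  · have := T.col_strict h' (YoungDiagram.mem_iff_lt_colLen.mpr h2)
    omega
  · have hlt : i2 < i1 := by omega
    have := T.col_strict hlt (YoungDiagram.mem_iff_lt_colLen.mpr h1)
    omega

lemma card_colSet (j : ℕ) : (colSetOf μ T j).card = μ.colLen j := by
  unfold colSetOf
  rw [Finset.card_image_of_injOn (col_injOn T j), Finset.card_range]

lemma cnt_colSet (j x : ℕ) :
    cnt (colSetOf μ T j) x = ((Finset.range (μ.colLen j)).filter (fun i => T i j ≤ x)).card := by
  unfold cnt colSetOf
  rw [Finset.filter_image]
  rw [Finset.card_image_of_injOn ((col_injOn T j).mono (by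
    intro i hi
    simp only [Finset.coe_filter, Set.mem_setOf_eq] at hi
    simpa using hi.1))]

lemma colSet_gale {j1 j2 : ℕ} (hj : j1 ≤ j2) :
    galeLe (colSetOf μ T j1) (colSetOf μ T j2) := by
  rw [galeLe_iff]
  constructor
  · rw [card_colSet, card_colSet]
    exact μ.colLen_anti j1 j2 hj
  · intro x
    rw [cnt_colSet, cnt_colSet]
    apply Finset.card_le_card
    intro i hi
    simp only [Finset.mem_filter, Finset.mem_range] at hi ⊢
    have hcl := μ.colLen_anti j1 j2 hj
    have hiμ : (i, j2) ∈ μ := YoungDiagram.mem_iff_lt_colLen.mpr hi.1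
    rcases eq_or_lt_of_le hj with rfl | hj'
    · exact ⟨by omega, hi.2⟩
    · have := T.row_weak hj' hiμ
      exact ⟨by omega, by omega⟩

end SSYT

section SSYT2

variable {μ : YoungDiagram} (T : SemistandardYoungTableau μ) {n : ℕ}

lemma colSet_chain (hentries : ∀ c ∈ μ.cells, 1 ≤ T c.1 c.2 ∧ T c.1 c.2 ≤ n) :
    IsGaleChain n ((Finset.range (μ.rowLen 0)).image (colSetOf μ T)) := by
  constructor
  · intro A hA
    obtain ⟨j, hj, rfl⟩ := Finset.mem_image.mp hA
    rw [Finset.mem_range] at hj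
    have hcol : 0 < μ.colLen j := by
      rw [← YoungDiagram.mem_iff_lt_colLen]
      exact YoungDiagram.mem_iff_lt_rowLen.mpr hj
    constructor
    · exact ⟨T 0 j, Finset.mem_image_of_mem _ (Finset.mem_range.mpr hcol)⟩
    · intro x hx
      obtain ⟨i, hi, rfl⟩ := Finset.mem_image.mp hx
      rw [Finset.mem_range] at hi
      have hc : (i, j) ∈ μ.cells :=
        (YoungDiagram.mem_cells _).mpr (YoungDiagram.mem_iff_lt_colLen.mpr hi)
      exact Finset.mem_Icc.mpr (hentries _ hc)
  · intro A hA B hB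
    obtain ⟨j1, _, rfl⟩ := Finset.mem_image.mp hA
    obtain ⟨j2, _, rfl⟩ := Finset.mem_image.mp hB
    rcases le_total j1 j2 with h | h
    · left; exact colSet_gale T h
    · right; exact colSet_gale T h

lemma colSet_card
    (hreduced : ∀ j1 < μ.rowLen 0, ∀ j2 < μ.rowLen 0,
      colSetOf μ T j1 = colSetOf μ T j2 → j1 = j2) :
    ((Finset.range (μ.rowLen 0)).image (colSetOf μ T)).card = μ.rowLen 0 := by
  rw [Finset.card_image_of_injOn, Finset.card_range]
  intro j1 h1 j2 h2 heq
  exact hreduced j1 (by simpa using h1) j2 (by simpa using h2) heq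

lemma parts_eq (hentries : ∀ c ∈ μ.cells, 1 ≤ T c.1 c.2 ∧ T c.1 c.2 ≤ n)
    (hreduced : ∀ j1 < μ.rowLen 0, ∀ j2 < μ.rowLen 0,
      colSetOf μ T j1 = colSetOf μ T j2 → j1 = j2) :
    {v : ℕ | 0 < v ∧ ∃ i, 1 ≤ i ∧ i ≤ n ∧ ∃ r, v = partRow μ T i r}
      = Set.Icc 1 (μ.rowLen 0) := by
  ext v
  simp only [Set.mem_setOf_eq, Set.mem_Icc]
  constructor
  · rintro ⟨hv, i, hi1, hin, r, rfl⟩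
    refine ⟨hv, ?_⟩
    calc partRow μ T i r ≤ μ.rowLen r := by
          unfold partRow
          exact le_trans (Finset.card_filter_le _ _) (le_of_eq (Finset.card_range _))
      _ ≤ μ.rowLen 0 := μ.rowLen_anti 0 r (Nat.zero_le r)
  · rintro ⟨hv1, hv2⟩
    obtain ⟨j, rfl⟩ : ∃ j, v = j + 1 := ⟨v - 1, by omega⟩
    have hkey : ∃ r, (r, j) ∈ μ ∧ ∀ x, j + 1 ≤ x → x < μ.rowLen r → T r j < T r x := by
      rcases eq_or_lt_of_le hv2 with hm | hm
      · refine ⟨0, YoungDiagram.mem_iff_lt_rowLen.mpr (by omega), ?_⟩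
        intro x hx1 hx2
        omega
      · rcases eq_or_lt_of_le (μ.colLen_anti j (j+1) (by omega)) with hcl | hcl
        · have hne : ∃ r < μ.colLen j, T r j ≠ T r (j+1) := by
            by_contra hc
            push_neg at hc
            have heq : colSetOf μ T j = colSetOf μ T (j+1) := by
              unfold colSetOf
              rw [hcl]
              apply Finset.image_congr
              intro i hi
              simp only [Finset.mem_coe, Finset.mem_range] at hi
              exact hc i hi
            have := hreduced j (by omega) (j+1) (by omega) heq
            omega
          obtain ⟨r, hr, hrne⟩ := hne
          have hrv : (r, j+1) ∈ μ := YoungDiagram.mem_iff_lt_colLen.mpr (by omega)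
          have hlt : T r j < T r (j+1) :=
            lt_of_le_of_ne (T.row_weak (by omega) hrv) hrne
          refine ⟨r, YoungDiagram.mem_iff_lt_colLen.mpr hr, ?_⟩
          intro x hx1 hx2
          have := T.row_weak_of_le hx1 (YoungDiagram.mem_iff_lt_rowLen.mpr hx2)
          omega
        · refine ⟨μ.colLen (j+1), YoungDiagram.mem_iff_lt_colLen.mpr hcl, ?_⟩
          intro x hx1 hx2
          exfalso
          have h1 : (μ.colLen (j+1), j+1) ∈ μ :=
            YoungDiagram.mem_iff_lt_rowLen.mpr (by omega)
          have := YoungDiagram.mem_iff_lt_colLen.mp h1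
          omega
    obtain ⟨r, hrj, hgt⟩ := hkey
    refine ⟨by omega, T r j, (hentries _ ((YoungDiagram.mem_cells _).mpr hrj)).1,
      (hentries _ ((YoungDiagram.mem_cells _).mpr hrj)).2, r, ?_⟩
    unfold partRow
    have hjr : j < μ.rowLen r := YoungDiagram.mem_iff_lt_rowLen.mp hrj
    have hset : (Finset.range (μ.rowLen r)).filter (fun x => T r x ≤ T r j)
        = Finset.range (j+1) := by
      ext x
      simp only [Finset.mem_filter, Finset.mem_range]
      constructor
      · rintro ⟨hx1, hx2⟩
        by_contra hc
        have := hgt x (by omega) hx1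
        omega
      · intro hx
        exact ⟨by omega, T.row_weak_of_le (by omega) hrj⟩
    rw [hset, Finset.card_range]

end SSYT2


/-- A reduced semistandard Young tableau `T` with entries in `[n]`
is maximal (its columns form a maximal chain in the tableau order on nonempty
subsets of `[n]`) if and only if the set of all (positive) parts of the partitions
`λ^{(i)}(T)`, `i ∈ [n]`, is exactly `{1, 2, …, binom(n+1,2)}`. -/
theorem stmt_13 (n : ℕ) (μ : YoungDiagram) (T : SemistandardYoungTableau μ)
    (hentries : ∀ c ∈ μ.cells, 1 ≤ T c.1 c.2 ∧ T c.1 c.2 ≤ n)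
    (hreduced : ∀ j1 < μ.rowLen 0, ∀ j2 < μ.rowLen 0,
      colSetOf μ T j1 = colSetOf μ T j2 → j1 = j2) :
    IsMaximalGaleChain n ((Finset.range (μ.rowLen 0)).image (colSetOf μ T)) ↔
      {m : ℕ | 0 < m ∧ ∃ i, 1 ≤ i ∧ i ≤ n ∧ ∃ r, m = partRow μ T i r} =
        Set.Icc 1 ((n + 1).choose 2) := by
  rw [maximal_iff_card (colSet_chain T hentries), colSet_card T hreduced,
    parts_eq T hentries hreduced]
  constructor
  · intro h
    rw [h]
  · intro h
    rw [Set.ext_iff] at h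
    simp only [Set.mem_Icc] at h
    have h1 := h 1
    have h2 := h (μ.rowLen 0)
    have h3 := h ((n+1).choose 2)
    omega
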